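/- For every H ∈ (0,1), the function B_H(t) = [2(1+H)(e^{Ht} + e^{−Ht}) − (e^{(1+H)t} + e^{−(1+H)t}) + (e^{t/2} − e^{−t/2})^{2H+2}]/(2+4H) is nonincreasing on [0,∞). -/

import Mathlib

lemma bernoulli_ub {a s : ℝ} (ha1 : a ≤ 1) (hs0 : 0 ≤ s) (hs1 : s ≤ 1) :
    (1 - a) ^ s ≤ 1 - s * a := by
  have h := Real.geom_mean_le_arith_mean2_weighted hs0 (by linarith : (0:ℝ) ≤ 1 - s)
    (by linarith : (0:ℝ) ≤ 1 - a) zero_le_one (by ring)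
  rw [Real.one_rpow, mul_one] at h
  nlinarith [h]

lemma core {q s : ℝ} (hq0 : 0 < q) (hq1 : q < 1) (hs0 : 0 < s) (hs2 : s < 2) :
    (1 - q) ^ s * (1 - q * q) ≤ 1 - s * q + s * q * q ^ s - q * q * q ^ s := by
  have h1q : (0:ℝ) < 1 - q := by linarith
  have hqs1 : q ^ s ≤ 1 := Real.rpow_le_one hq0.le hq1.le hs0.le
  have hqs0 : 0 < q ^ s := Real.rpow_pos_of_pos hq0 s
  rcases le_or_gt s 1 with hs1 | hs1
  · have hb : (1 - q) ^ s ≤ 1 - s * q := bernoulli_ub hq1.le hs0.le hs1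
    have hq2s : q * q ≤ q ^ s := by
      have h := Real.rpow_le_rpow_of_exponent_ge hq0 hq1.le (by linarith : s ≤ (2:ℝ))
      rwa [show (2:ℝ) = ((2:ℕ):ℝ) by norm_num, Real.rpow_natCast, pow_two] at h
    nlinarith [mul_le_mul_of_nonneg_right hb (by nlinarith : (0:ℝ) ≤ 1 - q*q),
      mul_nonneg (mul_nonneg hs0.le hq0.le) (sub_nonneg.2 hq2s),
      mul_nonneg (mul_nonneg hq0.le hq0.le) (sub_nonneg.2 hqs1)]
  · have hsplit : (1 - q) ^ s = (1 - q) * (1 - q) ^ (s - 1) := by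
      have h := Real.rpow_add h1q 1 (s-1)
      rw [Real.rpow_one, show (1:ℝ)+(s-1) = s by ring] at h
      exact h
    have hb : (1 - q) ^ (s-1) ≤ 1 - (s-1) * q :=
      bernoulli_ub hq1.le (by linarith) (by linarith)
    have hbnn : (0:ℝ) ≤ (1 - q) ^ (s-1) := Real.rpow_nonneg h1q.le _
    have hw : q ≤ q ^ (s-1) := by
      have h := Real.rpow_le_rpow_of_exponent_ge hq0 hq1.le (by linarith : s - 1 ≤ (1:ℝ))
      rwa [Real.rpow_one] at h
    have hw1 : q ^ (s-1) ≤ 1 := Real.rpow_le_one hq0.le hq1.le (by linarith)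
    have hqs : q ^ s = q * q ^ (s-1) := by
      have h := Real.rpow_add hq0 1 (s-1)
      rw [Real.rpow_one, show (1:ℝ)+(s-1) = s by ring] at h
      exact h
    rw [hsplit, hqs]
    set w := q ^ (s-1) with hwdef
    nlinarith [mul_le_mul_of_nonneg_right (mul_le_mul_of_nonneg_left hb h1q.le)
        (by nlinarith : (0:ℝ) ≤ 1 - q*q),
      mul_nonneg (mul_nonneg (mul_nonneg hq0.le hq0.le) (sub_nonneg.2 hw))
        (by linarith : (0:ℝ) ≤ s - q),
      mul_nonneg (mul_nonneg (by linarith : (0:ℝ) ≤ 2 - s) (mul_nonneg hq0.le hq0.le))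
        (by nlinarith : (0:ℝ) ≤ 1 - q*q)]

lemma exp_rpow' (x y : ℝ) : (Real.exp x) ^ y = Real.exp (x * y) := by
  rw [Real.rpow_def_of_pos (Real.exp_pos x), Real.log_exp]



/-- The correlation function `B_H` (formula (18)) of the stationary process dual to the
integrated fractional Brownian motion of Hurst index `H`. -/
noncomputable def BH (H t : ℝ) : ℝ :=
  (2*(1+H)*(Real.exp (H*t) + Real.exp (-H*t))
    - (Real.exp ((1+H)*t) + Real.exp (-(1+H)*t))
    + (Real.exp (t/2) - Real.exp (-t/2)) ^ (2*H+2)) / (2+4*H)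

/-- monotonicity assertion of Lemma 2: for every `H ∈ (0,1)`,
the function `B_H` is nonincreasing on `[0, ∞)`. -/
lemma BH_hasDerivAt (H : ℝ) (hH0 : 0 < H) (t : ℝ) :
    HasDerivAt (BH H)
      (((1+H) * (2*H*(Real.exp (H*t) - Real.exp (-H*t))
        - (Real.exp ((1+H)*t) - Real.exp (-(1+H)*t))
        + (Real.exp (t/2) + Real.exp (-t/2))
            * (Real.exp (t/2) - Real.exp (-t/2)) ^ (2*H+1))) / (2+4*H)) t := by
  have hexp : ∀ c : ℝ, HasDerivAt (fun x : ℝ => Real.exp (c*x)) (Real.exp (c*t) * c) t := by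
    intro c
    simpa using ((hasDerivAt_id t).const_mul c).exp
  have h5 : HasDerivAt (fun x : ℝ => Real.exp (x/2)) (Real.exp (t/2) * (1/2)) t := by
    simpa using ((hasDerivAt_id t).div_const 2).exp
  have h6 : HasDerivAt (fun x : ℝ => Real.exp (-x/2)) (Real.exp (-t/2) * (-1/2)) t := by
    simpa using (((hasDerivAt_id t).neg).div_const 2).exp
  have hC : HasDerivAt (fun x : ℝ => (Real.exp (x/2) - Real.exp (-x/2)) ^ (2*H+2))
      ((Real.exp (t/2) * (1/2) - Real.exp (-t/2) * (-1/2)) * (2*H+2)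
        * (Real.exp (t/2) - Real.exp (-t/2)) ^ (2*H+2-1)) t :=
    (h5.sub h6).rpow_const (Or.inr (by linarith))
  have hA : HasDerivAt (fun x : ℝ => 2*(1+H)*(Real.exp (H*x) + Real.exp (-H*x)))
      (2*(1+H)*(Real.exp (H*t) * H + Real.exp (-H*t) * (-H))) t :=
    ((hexp H).add (hexp (-H))).const_mul _
  have hB : HasDerivAt (fun x : ℝ => Real.exp ((1+H)*x) + Real.exp (-(1+H)*x))
      (Real.exp ((1+H)*t) * (1+H) + Real.exp (-(1+H)*t) * (-(1+H))) t :=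
    (hexp (1+H)).add (hexp (-(1+H)))
  have h := ((hA.sub hB).add hC).div_const (2+4*H)
  rw [show (2*H+2-1 : ℝ) = 2*H+1 by ring] at h
  have hfun : (fun x : ℝ => (2*(1+H)*(Real.exp (H*x) + Real.exp (-H*x))
      - (Real.exp ((1+H)*x) + Real.exp (-(1+H)*x))
      + (Real.exp (x/2) - Real.exp (-x/2)) ^ (2*H+2)) / (2+4*H)) = BH H := rfl
  replace h : HasDerivAt (BH H) _ t := h
  convert h using 1
  ring

theorem statement3 (H : ℝ) (hH : H ∈ Set.Ioo (0:ℝ) 1) :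
    AntitoneOn (BH H) (Set.Ici (0:ℝ)) := by
  obtain ⟨hH0, hH1⟩ := hH
  have hdiff : Differentiable ℝ (BH H) := fun t => (BH_hasDerivAt H hH0 t).differentiableAt
  apply antitoneOn_of_deriv_nonpos (convex_Ici 0) hdiff.continuous.continuousOn
    (hdiff.differentiableOn)
  intro t ht
  rw [interior_Ici] at ht
  have ht0 : (0:ℝ) < t := ht
  rw [(BH_hasDerivAt H hH0 t).deriv]
  set q : ℝ := Real.exp (-t) with hqdef
  have hq0 : 0 < q := Real.exp_pos _
  have hq1 : q < 1 := by
    rw [hqdef, show (1:ℝ) = Real.exp 0 by rw [Real.exp_zero]]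
    exact Real.exp_lt_exp.2 (by linarith)
  have hden : (0:ℝ) < 2 + 4*H := by linarith
  apply div_nonpos_of_nonpos_of_nonneg _ hden.le
  have hE : (0:ℝ) < Real.exp (-(1+H)*t) := Real.exp_pos _
  set G : ℝ := 2*H*(Real.exp (H*t) - Real.exp (-H*t))
      - (Real.exp ((1+H)*t) - Real.exp (-(1+H)*t))
      + (Real.exp (t/2) + Real.exp (-t/2))
          * (Real.exp (t/2) - Real.exp (-t/2)) ^ (2*H+1) with hGdef
  have hG : G * Real.exp (-(1+H)*t) ≤ 0 := by
    -- conversion facts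
    have f1 : Real.exp (H*t) * Real.exp (-(1+H)*t) = q := by
      rw [← Real.exp_add, hqdef]; congr 1; ring
    have f2 : Real.exp (-H*t) * Real.exp (-(1+H)*t) = q * q ^ (2*H) := by
      rw [hqdef, exp_rpow', ← Real.exp_add, ← Real.exp_add]; congr 1; ring
    have f3 : Real.exp ((1+H)*t) * Real.exp (-(1+H)*t) = 1 := by
      rw [← Real.exp_add, show ((1+H)*t + -(1+H)*t : ℝ) = 0 by ring, Real.exp_zero]
    have f4 : Real.exp (-(1+H)*t) * Real.exp (-(1+H)*t) = q * q * q ^ (2*H) := by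
      rw [hqdef, exp_rpow', ← Real.exp_add, ← Real.exp_add, ← Real.exp_add]; congr 1; ring
    have hbpos : (0:ℝ) < Real.exp (t/2) - Real.exp (-t/2) :=
      sub_pos.2 (Real.exp_lt_exp.2 (by linarith))
    have hb1 : (Real.exp (t/2) - Real.exp (-t/2)) ^ (2*H+1)
        = (Real.exp (t/2) - Real.exp (-t/2)) ^ (2*H) * (Real.exp (t/2) - Real.exp (-t/2)) := by
      rw [Real.rpow_add hbpos, Real.rpow_one]
    have hbase : Real.exp (t/2) - Real.exp (-t/2) = Real.exp (t/2) * (1 - q) := by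
      have h : Real.exp (t/2) * q = Real.exp (-t/2) := by
        rw [hqdef, ← Real.exp_add]; congr 1; ring
      linear_combination h
    have hb2H : (Real.exp (t/2) - Real.exp (-t/2)) ^ (2*H)
        = Real.exp (H*t) * (1 - q) ^ (2*H) := by
      rw [hbase, Real.mul_rpow (Real.exp_pos _).le (by linarith), exp_rpow']
      rw [show (t/2*(2*H) : ℝ) = H*t by ring]
    have g1 : Real.exp (H*t) * Real.exp t * Real.exp (-(1+H)*t) = 1 := by
      rw [← Real.exp_add, ← Real.exp_add, show (H*t + t + -(1+H)*t : ℝ) = 0 by ring,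
        Real.exp_zero]
    have g2 : Real.exp (H*t) * q * Real.exp (-(1+H)*t) = q * q := by
      rw [hqdef, ← Real.exp_add, ← Real.exp_add, ← Real.exp_add]; congr 1; ring
    have hd : (Real.exp (t/2) + Real.exp (-t/2)) * (Real.exp (t/2) - Real.exp (-t/2))
        = Real.exp t - q := by
      have h1 : Real.exp (t/2) * Real.exp (t/2) = Real.exp t := by
        rw [← Real.exp_add]; congr 1; ring
      have h2 : Real.exp (-t/2) * Real.exp (-t/2) = q := by
        rw [hqdef, ← Real.exp_add]; congr 1; ring
      linear_combination h1 - h2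
    have f5 : (Real.exp (t/2) + Real.exp (-t/2))
          * (Real.exp (t/2) - Real.exp (-t/2)) ^ (2*H+1) * Real.exp (-(1+H)*t)
        = (1 - q) ^ (2*H) * (1 - q * q) := by
      rw [hb1, hb2H]
      linear_combination (Real.exp (H*t) * (1-q) ^ (2*H) * Real.exp (-(1+H)*t)) * hd
        + (1-q) ^ (2*H) * g1 - (1-q) ^ (2*H) * g2
    have hcore := core hq0 hq1 (by linarith : (0:ℝ) < 2*H) (by linarith : (2*H:ℝ) < 2)
    have hexpand : G * Real.exp (-(1+H)*t)
        = 2*H*q - 2*H*(q * q ^ (2*H)) - 1 + q * q * q ^ (2*H)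
          + (1 - q) ^ (2*H) * (1 - q * q) := by
      rw [hGdef]
      linear_combination (2*H) * f1 - (2*H) * f2 - f3 + f4 + f5
    rw [hexpand]
    linarith
  nlinarith [hG, hE, mul_pos hE (show (0:ℝ) < 1 + H by linarith)]
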